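/- Let (X, Σ, μ) be a finite measure space with μ(X) > 0 and E a Banach lattice. If B(X, E, μ) is a KB-space, then E is a KB-space. -/

import Mathlib

open MeasureTheory Filter Topology

/-- A Banach lattice is a KB-space if every increasing norm bounded sequence of positive
elements is norm convergent. -/
def KBSpace (G : Type*) [NormedAddCommGroup G] [Lattice G] [IsOrderedAddMonoid G] [HasSolidNorm G] : Prop :=
  ∀ x : ℕ → G, Monotone x → (∀ n, 0 ≤ x n) → (∃ M : ℝ, ∀ n, ‖x n‖ ≤ M) →
    ∃ a : G, Tendsto x atTop (𝓝 a)

/-- If `μ(X) > 0` and `B(X, E, μ)` is a KB-space, then so is `E`. -/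
theorem stmt_9 {X : Type*} [MeasurableSpace X] (μ : Measure X) [IsFiniteMeasure μ] (hμ : 0 < μ Set.univ)
    {E : Type*} [NormedAddCommGroup E] [Lattice E] [IsOrderedAddMonoid E] [HasSolidNorm E] [CompleteSpace E]
    (hB : KBSpace (Lp E 1 μ)) : KBSpace E := by
  intro x hmono hpos ⟨M, hM⟩
  have hμ0 : μ ≠ 0 := by
    intro h; rw [h] at hμ; simp at hμ
  set C : ℝ := (μ Set.univ).toReal with hC
  have hCpos : 0 < C := ENNReal.toReal_pos hμ.ne' (measure_ne_top μ _)
  set c : E → Lp E 1 μ := fun a => MeasureTheory.Lp.const 1 μ a with hc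
  have hnorm : ∀ a : E, ‖c a‖ = ‖a‖ * C := by
    intro a
    rw [hc]
    have h := MeasureTheory.Lp.norm_const' 1 μ a one_ne_zero ENNReal.one_ne_top
    simp only [hc]
    rw [h]
    norm_num
    exact Or.inl rfl
  have hle : ∀ a b : E, a ≤ b → c a ≤ c b := by
    intro a b hab
    rw [← MeasureTheory.Lp.coeFn_le]
    filter_upwards [MeasureTheory.Lp.coeFn_const (p := 1) (μ := μ) a,
      MeasureTheory.Lp.coeFn_const (p := 1) (μ := μ) b] with y hy1 hy2
    rw [hy1, hy2]; exact hab
  have hmono' : Monotone (fun n => c (x n)) := fun m n h => hle _ _ (hmono h)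
  have hpos' : ∀ n, 0 ≤ c (x n) := by
    intro n
    have : c 0 = 0 := by
      rw [hc]; exact map_zero _
    rw [← this]; exact hle _ _ (hpos n)
  have hbd : ∃ M' : ℝ, ∀ n, ‖c (x n)‖ ≤ M' := by
    refine ⟨M * C, fun n => ?_⟩
    rw [hnorm]
    exact mul_le_mul_of_nonneg_right (hM n) hCpos.le
  obtain ⟨f, hf⟩ := hB (fun n => c (x n)) hmono' hpos' hbd
  have hcauchy : CauchySeq fun n => c (x n) := hf.cauchySeq
  have hx : CauchySeq x := by
    rw [Metric.cauchySeq_iff] at hcauchy ⊢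
    intro ε hε
    obtain ⟨N, hN⟩ := hcauchy (ε * C) (by positivity)
    refine ⟨N, fun m hm n hn => ?_⟩
    have := hN m hm n hn
    rw [dist_eq_norm, ← map_sub, hnorm, ← dist_eq_norm] at this
    calc dist (x m) (x n) = dist (x m) (x n) * C / C := by field_simp
    _ < ε * C / C := by
        apply div_lt_div_of_pos_right _ hCpos
        exact this
    _ = ε := by field_simp
  obtain ⟨a, ha⟩ := cauchySeq_tendsto_of_complete hx
  exact ⟨a, ha⟩
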